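/- There exists an absolute constant C > 0 such that the following holds. For each n, let the martingale differences (X_i)_{1≤i≤n} satisfy conditions (A2) and (A3) with exponent ρ ∈ (0, 1]. Set ξ_i = X_i/B_n, ζ_i(λ) = λ ξ_i − λ² ξ_i²/2, b_i(λ) = E[ζ_i(λ) e^{ζ_i(λ)} | 𝓕_{i-1}] / E[e^{ζ_i(λ)} | 𝓕_{i-1}], B_n(λ) = Σ_{i=1}^n b_i(λ), and ⟨M⟩_n = Σ_{i=1}^n E[ξ_i² | 𝓕_{i-1}]. Then for any sequence (λ_n) with λ_n ≥ 0 and λ_n · min{ε_n, κ_n} → 0 (i.e. λ_n = o(max{ε_n^{-1}, κ_n^{-1}})), for all sufficiently large n one has almost surely | B_n(λ_n) − (λ_n²/2) ⟨M⟩_n | ≤ C λ_n^{2+ρ} ε_n^ρ. -/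

import Mathlib

open MeasureTheory Filter
open scoped Topology ENNReal

noncomputable def stdNormalCDF (x : ℝ) : ℝ :=
  (Real.sqrt (2 * Real.pi))⁻¹ * ∫ t in Set.Iic x, Real.exp (-(t ^ 2) / 2)

/-- A finite sequence of square-integrable martingale differences
`X 1, ..., X n` adapted to a filtration `F 0 ⊆ F 1 ⊆ ... ⊆ F n`, with
`F 0` trivial, `E[X i | F (i-1)] = 0` and `0 < E[(X i)^2] < ∞`. -/
structure MDS (Ω : Type) [mΩ : MeasurableSpace Ω] (P : Measure Ω) where
  n : ℕ
  npos : 0 < n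
  F : ℕ → MeasurableSpace Ω
  F_mono : Monotone F
  F_le : ∀ i, F i ≤ mΩ
  F_zero : F 0 = ⊥
  X : ℕ → Ω → ℝ
  meas : ∀ i, 1 ≤ i → i ≤ n → StronglyMeasurable[F i] (X i)
  sq_int : ∀ i, 1 ≤ i → i ≤ n → Integrable (fun ω => (X i ω) ^ 2) P
  mean_zero : ∀ i, 1 ≤ i → i ≤ n → P[X i|F (i - 1)] =ᵐ[P] 0
  var_pos : ∀ i, 1 ≤ i → i ≤ n → 0 < ∫ ω, (X i ω) ^ 2 ∂P

namespace MDS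

variable {Ω : Type} [mΩ : MeasurableSpace Ω] {P : Measure Ω}

/-- `S_n = ∑_{i=1}^n X_i`. -/
noncomputable def S (A : MDS Ω P) : Ω → ℝ := fun ω => ∑ i ∈ Finset.Icc 1 A.n, A.X i ω

/-- `B_n² = ∑_{i=1}^n E[X_i²]`. -/
noncomputable def Bsq (A : MDS Ω P) : ℝ := ∑ i ∈ Finset.Icc 1 A.n, ∫ ω, (A.X i ω) ^ 2 ∂P

/-- `[S]_n = ∑_{i=1}^n X_i²`. -/
noncomputable def QV (A : MDS Ω P) : Ω → ℝ := fun ω => ∑ i ∈ Finset.Icc 1 A.n, (A.X i ω) ^ 2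

/-- `⟨S⟩_n = ∑_{i=1}^n E[X_i² | F_{i-1}]`. -/
noncomputable def CV (A : MDS Ω P) : Ω → ℝ :=
  fun ω => ∑ i ∈ Finset.Icc 1 A.n, (P[fun ω' => (A.X i ω') ^ 2|A.F (i - 1)]) ω

/-- `W_n = S_n / √[S]_n`. -/
noncomputable def W (A : MDS Ω P) : Ω → ℝ := fun ω => A.S ω / Real.sqrt (A.QV ω)

/-- Condition (A1): `|⟨S⟩_n − B_n²| ≤ δ² B_n²` a.s., with `δ ∈ [0, 1/4]`. -/
def CondA1 (A : MDS Ω P) (δ : ℝ) : Prop :=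
  0 ≤ δ ∧ δ ≤ 1 / 4 ∧ ∀ᵐ ω ∂P, |A.CV ω - A.Bsq| ≤ δ ^ 2 * A.Bsq

/-- Condition (A2): `∑_{i=1}^n E[|X_i|^{2+ρ} | F_{i-1}] ≤ ε^ρ B_n^{2+ρ}` a.s.,
with `ε ∈ (0, 1/4]`. -/
def CondA2 (A : MDS Ω P) (ρ ε : ℝ) : Prop :=
  0 < ε ∧ ε ≤ 1 / 4 ∧
    (∀ i, 1 ≤ i → i ≤ A.n → Integrable (fun ω => |A.X i ω| ^ (2 + ρ)) P) ∧
    ∀ᵐ ω ∂P,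
      ∑ i ∈ Finset.Icc 1 A.n, (P[fun ω' => |A.X i ω'| ^ (2 + ρ)|A.F (i - 1)]) ω ≤
        ε ^ ρ * A.Bsq ^ ((2 + ρ) / 2)

/-- Condition (A3): `E[X_i² | F_{i-1}] ≤ κ² B_n²` a.s. for each `i`, with `κ ∈ (0, 1/4]`. -/
def CondA3 (A : MDS Ω P) (κ : ℝ) : Prop :=
  0 < κ ∧ κ ≤ 1 / 4 ∧
    ∀ i, 1 ≤ i → i ≤ A.n →
      ∀ᵐ ω ∂P, (P[fun ω' => (A.X i ω') ^ 2|A.F (i - 1)]) ω ≤ κ ^ 2 * A.Bsq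

/-- Condition (A4): `E[|X_i|^{2+ρ} | F_{i-1}] ≤ (γ B_n)^ρ E[X_i² | F_{i-1}]` a.s.
for each `i`, with `γ ∈ (0, 1/4]`. -/
def CondA4 (A : MDS Ω P) (ρ γ : ℝ) : Prop :=
  0 < γ ∧ γ ≤ 1 / 4 ∧
    (∀ i, 1 ≤ i → i ≤ A.n → Integrable (fun ω => |A.X i ω| ^ (2 + ρ)) P) ∧
    ∀ i, 1 ≤ i → i ≤ A.n →
      ∀ᵐ ω ∂P,
        (P[fun ω' => |A.X i ω'| ^ (2 + ρ)|A.F (i - 1)]) ω ≤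
          (γ * Real.sqrt A.Bsq) ^ ρ * (P[fun ω' => (A.X i ω') ^ 2|A.F (i - 1)]) ω

end MDS


namespace MDS

variable {Ω : Type} [mΩ : MeasurableSpace Ω] {P : Measure Ω}

/-- `ξ_i = X_i / B_n`. -/
noncomputable def xi (A : MDS Ω P) (i : ℕ) : Ω → ℝ := fun ω => A.X i ω / Real.sqrt A.Bsq

/-- `ζ_i(λ) = λ ξ_i − λ² ξ_i² / 2`. -/
noncomputable def zetaFn (A : MDS Ω P) (lam : ℝ) (i : ℕ) : Ω → ℝ :=
  fun ω => lam * A.xi i ω - lam ^ 2 * (A.xi i ω) ^ 2 / 2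

/-- `b_i(λ) = E[ζ_i(λ) e^{ζ_i(λ)} | F_{i-1}] / E[e^{ζ_i(λ)} | F_{i-1}]`. -/
noncomputable def bCoef (A : MDS Ω P) (lam : ℝ) (i : ℕ) : Ω → ℝ := fun ω =>
  (P[fun ω' => A.zetaFn lam i ω' * Real.exp (A.zetaFn lam i ω')|A.F (i - 1)]) ω /
    (P[fun ω' => Real.exp (A.zetaFn lam i ω')|A.F (i - 1)]) ω

/-- The drift process `B_n(λ) = ∑_{i=1}^n b_i(λ)`. -/
noncomputable def drift (A : MDS Ω P) (lam : ℝ) : Ω → ℝ :=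
  fun ω => ∑ i ∈ Finset.Icc 1 A.n, A.bCoef lam i ω

/-- `⟨M⟩_n = ∑_{i=1}^n E[ξ_i² | F_{i-1}]`. -/
noncomputable def McondVar (A : MDS Ω P) : Ω → ℝ :=
  fun ω => ∑ i ∈ Finset.Icc 1 A.n, (P[fun ω' => (A.xi i ω') ^ 2|A.F (i - 1)]) ω

end MDS

namespace DriftAux

lemma exp_taylor_ub {z : ℝ} (hz : z ≤ 1/2) : Real.exp z - 1 - z ≤ 2 * z^2 := by
  have h1 : -z + 1 ≤ Real.exp (-z) := Real.add_one_le_exp (-z)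
  have h2 : Real.exp (-z) * Real.exp z = 1 := by rw [← Real.exp_add]; simp
  have h3 : (1 - z) * Real.exp z ≤ 1 := by nlinarith [Real.exp_pos z]
  nlinarith [Real.exp_pos z, sq_nonneg z, mul_nonneg (sq_nonneg z) (by linarith : (0:ℝ) ≤ 1 - 2*z)]

lemma exp_taylor_lb (z : ℝ) : 0 ≤ Real.exp z - 1 - z := by
  have := Real.add_one_le_exp z; linarith

lemma abs_mul_exp_le_one {z : ℝ} (hz : z ≤ 1/2) : |z * Real.exp z| ≤ 1 := by
  rcases le_or_gt z 0 with h | h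
  · have h1 : -z + 1 ≤ Real.exp (-z) := Real.add_one_le_exp (-z)
    have h2 : Real.exp (-z) * Real.exp z = 1 := by rw [← Real.exp_add]; simp
    have h3 : (-z) * Real.exp z ≤ 1 := by nlinarith [Real.exp_pos z]
    rw [abs_of_nonpos (mul_nonpos_of_nonpos_of_nonneg h (Real.exp_pos z).le)]
    linarith
  · have he : Real.exp z ≤ Real.exp (1/2) := Real.exp_le_exp.2 hz
    have h2 : Real.exp (1/2) * Real.exp (1/2) = Real.exp 1 := by
      rw [← Real.exp_add]; norm_num
    have h1 : Real.exp 1 < 2.7182818286 := Real.exp_one_lt_d9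
    have hhalf : Real.exp (1/2) < 2 := by nlinarith [Real.exp_pos (1/2)]
    rw [abs_of_nonneg (mul_nonneg h.le (Real.exp_pos z).le)]
    nlinarith [Real.exp_pos z]

lemma mul_exp_le_half_exp {z : ℝ} (hz : z ≤ 1/2) : z * Real.exp z ≤ (1/2) * Real.exp z :=
  mul_le_mul_of_nonneg_right hz (Real.exp_pos z).le

lemma z_le_half (u : ℝ) : u - u^2/2 ≤ 1/2 := by nlinarith [sq_nonneg (u-1)]

lemma hfun_bound {ρ : ℝ} (hρ : 0 < ρ) (hρ' : ρ ≤ 1) (u : ℝ) :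
    |(u - u^2/2) * Real.exp (u - u^2/2) - u - u^2/2| ≤ 9 * |u| ^ (2+ρ) := by
  set z := u - u^2/2 with hzdef
  clear_value z
  have hz : z ≤ 1/2 := by rw [hzdef]; exact z_le_half u
  rcases le_or_gt (|u|) 1 with hu | hu
  · have hE0 : 0 ≤ Real.exp z - 1 - z := exp_taylor_lb z
    have hE2 : Real.exp z - 1 - z ≤ 2*z^2 := exp_taylor_ub hz
    set E := Real.exp z - 1 - z with hEdef
    clear_value E
    have hu2 : u^2 ≤ |u| := by nlinarith [sq_abs u, abs_nonneg u]
    have hz32 : |z| ≤ 3/2 * |u| := by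
      rw [abs_le, hzdef]
      constructor <;> nlinarith [neg_abs_le u, le_abs_self u, abs_nonneg u]
    have hexpr : z * Real.exp z - u - u^2/2 = (-u^3 + u^4/4) + z*E := by
      rw [hEdef, hzdef]; ring
    have h4 : |z*E| ≤ 27/4 * |u|^3 := by
      rw [abs_mul, abs_of_nonneg hE0]
      have h5 : |z| * E ≤ |z| * (2*z^2) := mul_le_mul_of_nonneg_left hE2 (abs_nonneg z)
      have hz3 : |z|^3 ≤ (3/2*|u|)^3 := pow_le_pow_left₀ (abs_nonneg z) hz32 3
      nlinarith [sq_abs z, abs_nonneg z]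
    have h2 : |(-u^3 + u^4/4)| ≤ (5/4) * |u|^3 := by
      have h3 : |(-u^3 + u^4/4)| ≤ |u|^3 + |u|^4/4 := by
        calc |(-u^3 + u^4/4)| ≤ |(-u^3)| + |u^4/4| := abs_add_le _ _
        _ = |u|^3 + |u|^4/4 := by rw [abs_neg, abs_pow, abs_div, abs_pow]; norm_num
      have hu4 : |u|^4 ≤ |u|^3 := pow_le_pow_of_le_one (abs_nonneg u) hu (by norm_num)
      linarith
    have h6 : |z * Real.exp z - u - u^2/2| ≤ 8 * |u|^3 := by
      rw [hexpr]
      calc |(-u^3 + u^4/4) + z*E| ≤ |(-u^3 + u^4/4)| + |z*E| := abs_add_le _ _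
      _ ≤ 8 * |u|^3 := by linarith
    have hfin : |u|^(3:ℕ) ≤ |u| ^ (2+ρ) := by
      rcases eq_or_lt_of_le (abs_nonneg u) with h0 | h0
      · rw [← h0, Real.zero_rpow (by linarith)]; norm_num
      · have := Real.rpow_le_rpow_of_exponent_ge h0 hu (by linarith : 2+ρ ≤ (3:ℝ))
        rwa [show ((3:ℝ) = ((3:ℕ):ℝ)) by norm_num, Real.rpow_natCast] at this
    calc |z * Real.exp z - u - u^2/2| ≤ 8 * |u|^3 := h6
    _ ≤ 9 * |u|^(2+ρ) := by nlinarith [pow_nonneg (abs_nonneg u) 3]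
  · have h1 : |z * Real.exp z| ≤ 1 := abs_mul_exp_le_one hz
    have hu2 : |u| ≤ |u|^2 := by nlinarith [abs_nonneg u]
    have h3 : |u|^(2:ℕ) ≤ |u| ^ (2+ρ) := by
      have := Real.rpow_le_rpow_of_exponent_le hu.le (by linarith : (2:ℝ) ≤ 2+ρ)
      rwa [show ((2:ℝ) = ((2:ℕ):ℝ)) by norm_num, Real.rpow_natCast] at this
    have h5 : |z * Real.exp z - u - u^2/2| ≤ |z*Real.exp z| + |u| + u^2/2 := by
      have h6 := le_abs_self u; have h7 := neg_abs_le u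
      have h8 := le_abs_self (z*Real.exp z); have h9 := neg_abs_le (z*Real.exp z)
      rw [abs_le]; constructor <;> nlinarith [sq_nonneg u]
    have h7 : |z * Real.exp z - u - u^2/2| ≤ (5/2) * |u|^2 := by
      have h10 : 1 ≤ |u|^2 := by nlinarith [abs_nonneg u]
      nlinarith [sq_abs u]
    calc |z * Real.exp z - u - u^2/2| ≤ (5/2)*|u|^2 := h7
    _ ≤ 9 * |u|^(2+ρ) := by nlinarith [pow_nonneg (abs_nonneg u) 2]

lemma gfun_bound (u : ℝ) : |Real.exp (u - u^2/2) - 1 - u| ≤ 5 * u^2 := by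
  set z := u - u^2/2 with hzdef
  clear_value z
  have hz : z ≤ 1/2 := by rw [hzdef]; exact z_le_half u
  have hE0 : 0 ≤ Real.exp z - 1 - z := exp_taylor_lb z
  have hE2 : Real.exp z - 1 - z ≤ 2*z^2 := exp_taylor_ub hz
  rcases le_or_gt (|u|) 1 with hu | hu
  · have hu2 : u^2 ≤ |u| := by nlinarith [sq_abs u, abs_nonneg u]
    have hz32 : |z| ≤ 3/2 * |u| := by
      rw [abs_le, hzdef]
      constructor <;> nlinarith [neg_abs_le u, le_abs_self u, abs_nonneg u]
    have hzz : z^2 ≤ 9/4 * u^2 := by nlinarith [sq_abs z, sq_abs u, abs_nonneg z, abs_nonneg u]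
    have heq : Real.exp z - 1 - u = (Real.exp z - 1 - z) - u^2/2 := by rw [hzdef]; ring
    rw [heq, abs_le]
    constructor <;> nlinarith [sq_nonneg u]
  · have h1 : Real.exp z ≤ Real.exp (1/2) := Real.exp_le_exp.2 hz
    have h2 : Real.exp (1/2) * Real.exp (1/2) = Real.exp 1 := by
      rw [← Real.exp_add]; norm_num
    have hd9 : Real.exp 1 < 2.7182818286 := Real.exp_one_lt_d9
    have hhalf : Real.exp (1/2) < 2 := by nlinarith [Real.exp_pos (1/2)]
    have hu2 : 1 ≤ u^2 := by nlinarith [sq_abs u, abs_nonneg u]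
    have hau : |u| ≤ u^2 := by nlinarith [sq_abs u, abs_nonneg u]
    rw [abs_le]
    constructor <;> nlinarith [Real.exp_pos z, le_abs_self u, neg_abs_le u]

lemma threshold {ρ lam θ x : ℝ} (hρ : 0 < ρ) (hl : 0 < lam) (hθ : 0 < θ) :
    x^2 ≤ θ^2/lam^2 + (lam/θ)^ρ * |x|^(2+ρ) := by
  have hx0 : (0:ℝ) ≤ |x| := abs_nonneg x
  rcases le_or_gt (lam*|x|) θ with h | h
  · have h1 : x^2 ≤ θ^2/lam^2 := by
      rw [le_div_iff₀ (by positivity)]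
      nlinarith [sq_abs x, mul_le_mul h h (by positivity : (0:ℝ) ≤ lam*|x|) hθ.le]
    have h2 : (0:ℝ) ≤ (lam/θ)^ρ * |x|^(2+ρ) := by positivity
    linarith
  · have hx : 0 < |x| := by
      by_contra hc
      push_neg at hc
      have h9 : |x| = 0 := le_antisymm hc hx0
      rw [h9] at h; nlinarith
    have hb : 1 ≤ lam/θ * |x| := by
      rw [div_mul_eq_mul_div, le_div_iff₀ hθ, one_mul]; linarith
    have key : 1 ≤ ((lam/θ) * |x|)^ρ := by
      calc (1:ℝ) = 1^ρ := (Real.one_rpow ρ).symm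
      _ ≤ ((lam/θ)*|x|)^ρ := Real.rpow_le_rpow zero_le_one hb hρ.le
    have hsplit : |x|^(2+ρ) = x^2 * |x|^ρ := by
      rw [Real.rpow_add hx, show ((2:ℝ) = ((2:ℕ):ℝ)) by norm_num, Real.rpow_natCast, sq_abs]
    have hmul : (lam/θ)^ρ * |x|^ρ = ((lam/θ)*|x|)^ρ :=
      (Real.mul_rpow (by positivity) hx0).symm
    have h3 : x^2 ≤ (lam/θ)^ρ * |x|^(2+ρ) := by
      rw [hsplit]
      calc x^2 = x^2 * 1 := by ring
      _ ≤ x^2 * ((lam/θ)*|x|)^ρ := by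
          apply mul_le_mul_of_nonneg_left key (sq_nonneg x)
      _ = (lam/θ)^ρ * (x^2 * |x|^ρ) := by rw [← hmul]; ring
    have h4 : (0:ℝ) ≤ θ^2/lam^2 := by positivity
    linarith

lemma tangent {x y p : ℝ} (hx : 0 ≤ x) (hy : 0 ≤ y) (hp : 1 ≤ p) :
    y^p + p * y^(p-1) * (x - y) ≤ x^p := by
  rcases eq_or_lt_of_le hy with h0 | h0
  · rcases eq_or_lt_of_le hp with hp1 | hp1
    · rw [← h0, ← hp1]
      simp [Real.rpow_one]
    · rw [← h0, Real.zero_rpow (by linarith), Real.zero_rpow (by intro hc; rw [sub_eq_zero] at hc; exact hp1.ne hc.symm)]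
      have h9 : (0:ℝ) ≤ x^p := Real.rpow_nonneg hx p
      nlinarith
  · have hs : -1 ≤ x/y - 1 := by
      have h9 : 0 ≤ x/y := div_nonneg hx h0.le
      linarith
    have hb := one_add_mul_self_le_rpow_one_add hs hp
    have h1s : 1 + (x/y - 1) = x/y := by ring
    have hxy : (x/y)^p = x^p / y^p := Real.div_rpow hx h0.le p
    have hyp : 0 < y^p := Real.rpow_pos_of_pos h0 p
    have hy1 : y^(p-1) = y^p / y := by rw [Real.rpow_sub h0, Real.rpow_one]
    have hb2 : 1 + p*(x/y - 1) ≤ x^p/y^p := by rw [h1s, hxy] at hb; exact hb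
    rw [hy1]
    calc y^p + p * (y^p/y) * (x - y) = y^p * (1 + p*(x/y - 1)) := by field_simp
    _ ≤ y^p * (x^p/y^p) := mul_le_mul_of_nonneg_left hb2 hyp.le
    _ = x^p := by field_simp





variable {Ωt : Type} {m : MeasurableSpace Ωt} [mΩt : MeasurableSpace Ωt] {P : Measure Ωt}
  [IsProbabilityMeasure P]

lemma condexp_pos_of_pos (hm : m ≤ mΩt) {f : Ωt → ℝ} (hf : Integrable f P)
    (hfpos : ∀ᵐ ω ∂P, 0 < f ω) : ∀ᵐ ω ∂P, 0 < (P[f|m]) ω := by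
  set g := P[f|m] with hg
  have hgm : StronglyMeasurable[m] g := stronglyMeasurable_condExp
  have hs : MeasurableSet[m] {ω | g ω ≤ 0} := hgm.measurable measurableSet_Iic
  have hsm : MeasurableSet {ω | g ω ≤ 0} := hm _ hs
  have key : ∫ ω in {ω | g ω ≤ 0}, g ω ∂P = ∫ ω in {ω | g ω ≤ 0}, f ω ∂P :=
    setIntegral_condExp hm hf hs
  have hint : ∫ ω in {ω | g ω ≤ 0}, g ω ∂P ≤ 0 :=
    setIntegral_nonpos hsm (fun ω hω => hω)
  have hge : 0 ≤ ∫ ω in {ω | g ω ≤ 0}, f ω ∂P :=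
    setIntegral_nonneg_of_ae_restrict (ae_restrict_of_ae (hfpos.mono fun ω h => h.le))
  have hz : ∫ ω in {ω | g ω ≤ 0}, f ω ∂P = 0 := le_antisymm (key ▸ hint) hge
  have hf0 : f =ᵐ[P.restrict {ω | g ω ≤ 0}] 0 :=
    (setIntegral_eq_zero_iff_of_nonneg_ae
      (ae_restrict_of_ae (hfpos.mono fun ω h => h.le)) hf.integrableOn).mp hz
  have hcontr : ∀ᵐ ω ∂(P.restrict {ω | g ω ≤ 0}), False := by
    filter_upwards [hf0, ae_restrict_of_ae hfpos] with ω h1 h2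
    exact absurd h1 h2.ne'
  have hP0 : P {ω | g ω ≤ 0} = 0 := by
    have h2 : P.restrict {ω | g ω ≤ 0} Set.univ = 0 := by
      rw [ae_iff] at hcontr
      simpa using hcontr
    rwa [Measure.restrict_apply_univ] at h2
  rw [ae_iff]
  convert hP0 using 2
  ext ω
  simp [not_lt]

lemma condexp_abs_bound {f g : Ωt → ℝ} (hf : Integrable f P) (hg : Integrable g P)
    (h : ∀ᵐ ω ∂P, |f ω| ≤ g ω) : ∀ᵐ ω ∂P, |(P[f|m]) ω| ≤ (P[g|m]) ω := by
  have h1 : P[f|m] ≤ᵐ[P] P[g|m] :=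
    condExp_mono hf hg (h.mono fun ω hω => (le_abs_self _).trans hω)
  have h2 : P[-g|m] ≤ᵐ[P] P[f|m] :=
    condExp_mono hg.neg hf (h.mono fun ω hω => by
      have := neg_abs_le (f ω); simp only [Pi.neg_apply]; linarith)
  have h3 := condExp_neg (μ := P) (m := m) g
  filter_upwards [h1, h2, h3] with ω e1 e2 e3
  rw [e3] at e2
  simp only [Pi.neg_apply] at e2
  rw [abs_le]
  exact ⟨by linarith, e1⟩

lemma condexp_const_mul (c : ℝ) (f : Ωt → ℝ) :
    P[fun ω => c * f ω|m] =ᵐ[P] fun ω => c * (P[f|m]) ω := by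
  have h := condExp_smul (μ := P) (m := m) c f
  exact h

/-- If `|G - k - a ξ - b ξ²| ≤ c H` pointwise a.e. and `E[ξ|m] = 0`, then
`|E[G|m] - k - b E[ξ²|m]| ≤ c E[H|m]` a.e. -/
lemma condexp_quad_approx (hm : m ≤ mΩt) {ξ : Ωt → ℝ} (hξ1 : Integrable ξ P)
    (hξ2 : Integrable (fun ω => ξ ω^2) P) (hmean : P[ξ|m] =ᵐ[P] 0)
    {k a b c : ℝ} {G H : Ωt → ℝ}
    (hG : Integrable G P) (hH : Integrable H P)
    (hbound : ∀ᵐ ω ∂P, |G ω - k - a * ξ ω - b * ξ ω^2| ≤ c * H ω) :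
    ∀ᵐ ω ∂P, |(P[G|m]) ω - k - b * (P[fun ω' => ξ ω'^2|m]) ω| ≤ c * (P[H|m]) ω := by
  set err := fun ω => G ω - k - a * ξ ω - b * ξ ω^2 with herrdef
  have ha : Integrable (fun ω => a * ξ ω) P := hξ1.const_mul a
  have hb : Integrable (fun ω => b * ξ ω^2) P := hξ2.const_mul b
  have herr : Integrable err P := ((hG.sub (integrable_const k)).sub ha).sub hb
  have habs : ∀ᵐ ω ∂P, |(P[err|m]) ω| ≤ (P[fun ω' => c * H ω'|m]) ω :=
    condexp_abs_bound herr (hH.const_mul c) hbound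
  have hcH := condexp_const_mul (m := m) (P := P) c H
  have hGdecomp : G = fun ω => err ω + (k + (a * ξ ω + b * ξ ω^2)) := by
    funext ω; simp only [herrdef]; ring
  have hsplit : P[G|m] =ᵐ[P]
      fun ω => (P[err|m]) ω + (k + ((P[fun ω' => a * ξ ω'|m]) ω
        + (P[fun ω' => b * ξ ω'^2|m]) ω)) := by
    rw [hGdecomp]
    have h1 : P[fun ω => err ω + (k + (a * ξ ω + b * ξ ω^2))|m] =ᵐ[P]
        P[err|m] + P[fun ω => k + (a * ξ ω + b * ξ ω^2)|m] :=
      condExp_add herr ((integrable_const k).add (ha.add hb)) m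
    have h2 : P[fun ω => k + (a * ξ ω + b * ξ ω^2)|m] =ᵐ[P]
        P[fun _ => k|m] + P[fun ω => a * ξ ω + b * ξ ω^2|m] :=
      condExp_add (integrable_const k) (ha.add hb) m
    have h3 : P[fun ω => a * ξ ω + b * ξ ω^2|m] =ᵐ[P]
        P[fun ω => a * ξ ω|m] + P[fun ω => b * ξ ω^2|m] := condExp_add ha hb m
    have h4 : P[fun _ : Ωt => k|m] = fun _ => k := condExp_const hm k
    filter_upwards [h1, h2, h3] with ω e1 e2 e3
    simp only [Pi.add_apply] at e1 e2 e3 ⊢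
    rw [e1, e2, e3, h4]
  have haξ : P[fun ω => a * ξ ω|m] =ᵐ[P] fun _ => 0 := by
    have h1 := condexp_const_mul (m := m) (P := P) a ξ
    filter_upwards [h1, hmean] with ω e1 e2
    rw [e1]; simp [e2]
  have hbξ : P[fun ω => b * ξ ω^2|m] =ᵐ[P] fun ω => b * (P[fun ω' => ξ ω'^2|m]) ω :=
    condexp_const_mul b _
  filter_upwards [habs, hcH, hsplit, haξ, hbξ] with ω e1 e2 e3 e4 e5
  rw [e2] at e1
  rw [e3, e4, e5]
  convert e1 using 2
  ring

lemma cov_ineq (a b : ℝ) : b * Real.exp a + Real.exp b * a - b * Real.exp b ≤ a * Real.exp a := by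
  rcases le_total a b with h | h
  · nlinarith [mul_nonneg (by linarith : (0:ℝ) ≤ b - a)
      (sub_nonneg.2 (Real.exp_le_exp.2 h))]
  · nlinarith [mul_nonneg (by linarith : (0:ℝ) ≤ a - b)
      (sub_nonneg.2 (Real.exp_le_exp.2 h))]

lemma lam4_bound {ρ lam s t : ℝ} (hρ : 0 < ρ) (hρ' : ρ ≤ 1) (hlam : 0 ≤ lam)
    (hs0 : 0 ≤ s) (ht : 0 ≤ t) (hjen : s ^ ((2+ρ)/2) ≤ t) (hsm : lam^2*s ≤ 1) :
    lam^4 * s^2 ≤ lam^(2+ρ) * t := by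
  rcases eq_or_lt_of_le hs0 with h0 | h0
  · rw [← h0]
    have : lam^4 * (0:ℝ)^2 = 0 := by ring
    rw [this]
    exact mul_nonneg (Real.rpow_nonneg hlam _) ht
  rcases eq_or_lt_of_le hlam with hl0 | hl0
  · rw [← hl0]
    have h1 : (0:ℝ)^4 * s^2 = 0 := by ring
    rw [h1]
    exact mul_nonneg (Real.rpow_nonneg le_rfl _) ht
  have hls : 0 < lam^2*s := by positivity
  have key : lam^4*s^2 = (lam^2*s)^((2-ρ)/2) * ((lam^2*s)^((2+ρ)/2)) := by
    rw [← Real.rpow_add hls, show ((2-ρ)/2) + ((2+ρ)/2) = (2:ℝ) by ring,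
        show ((2:ℝ) = ((2:ℕ):ℝ)) by norm_num, Real.rpow_natCast]
    ring
  have h1 : (lam^2*s)^((2-ρ)/2) ≤ 1 :=
    Real.rpow_le_one hls.le hsm (by linarith)
  have h2 : (lam^2*s)^((2+ρ)/2) = lam^(2+ρ) * s^((2+ρ)/2) := by
    rw [Real.mul_rpow (by positivity) hs0, ← Real.rpow_natCast lam 2, ← Real.rpow_mul hlam,
        show ((2:ℕ):ℝ)*((2+ρ)/2) = 2+ρ by push_cast; ring]
  calc lam^4*s^2 = (lam^2*s)^((2-ρ)/2) * (lam^2*s)^((2+ρ)/2) := key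
  _ ≤ 1 * (lam^2*s)^((2+ρ)/2) :=
      mul_le_mul_of_nonneg_right h1 (Real.rpow_nonneg hls.le _)
  _ = lam^(2+ρ) * s^((2+ρ)/2) := by rw [one_mul, h2]
  _ ≤ lam^(2+ρ) * t := mul_le_mul_of_nonneg_left hjen (Real.rpow_nonneg hlam _)

lemma final_arith {ρ lam s t NN DD : ℝ} (hρ : 0 < ρ) (hρ' : ρ ≤ 1) (hlam : 0 ≤ lam)
    (hs0 : 0 ≤ s) (hs1 : s ≤ 1) (ht : 0 ≤ t)
    (hjen : s ^ ((2+ρ)/2) ≤ t)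
    (hN : |NN - lam^2/2 * s| ≤ 9 * lam^(2+ρ) * t)
    (hD : |DD - 1| ≤ 5 * lam^2 * s)
    (hDpos : 0 < DD)
    (hNle : NN ≤ 1/2 * DD)
    (hNge : -(lam^2/2) * s * DD ≤ NN)
    (hthr : 1/16 < lam^2*s → lam^2*s ≤ 1/64 + 8 * lam^(2+ρ) * t) :
    |NN/DD - lam^2/2 * s| ≤ 96 * lam^(2+ρ) * t := by
  have hlt0 : 0 ≤ lam^(2+ρ) := Real.rpow_nonneg hlam _
  have hltt : 0 ≤ lam^(2+ρ)*t := mul_nonneg hlt0 ht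
  by_cases hsmall : lam^2*s ≤ 1/16
  · have hDa := abs_le.1 hD
    have hD1 : 1/2 ≤ DD := by nlinarith [hDa.1]
    have hquart : lam^4*s^2 ≤ lam^(2+ρ)*t :=
      lam4_bound hρ hρ' hlam hs0 ht hjen (by nlinarith)
    have key : NN/DD - lam^2/2*s = (NN - lam^2/2*s*DD)/DD := by
      field_simp
    have habs : |NN - lam^2/2*s*DD| ≤ 9*lam^(2+ρ)*t + 5/2*(lam^4*s^2) := by
      have h1 : NN - lam^2/2*s*DD = (NN - lam^2/2*s) - lam^2/2*s*(DD - 1) := by ring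
      have h2 : |lam^2/2*s*(DD-1)| = lam^2/2*s*|DD-1| := by
        rw [abs_mul, abs_of_nonneg (by positivity : (0:ℝ) ≤ lam^2/2*s)]
      calc |NN - lam^2/2*s*DD| ≤ |NN - lam^2/2*s| + |lam^2/2*s*(DD-1)| := by
            rw [h1]; exact abs_sub _ _
      _ ≤ 9*lam^(2+ρ)*t + 5/2*(lam^4*s^2) := by
            rw [h2]
            have h3 : lam^2/2*s*|DD-1| ≤ lam^2/2*s*(5*lam^2*s) :=
              mul_le_mul_of_nonneg_left hD (by positivity)
            nlinarith
    rw [key, abs_div, abs_of_pos hDpos, div_le_iff₀ hDpos]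
    linarith [habs, hquart, mul_le_mul_of_nonneg_left hD1 hltt,
      abs_nonneg (NN - lam^2/2*s*DD)]
  · push_neg at hsmall
    have h2 := hthr hsmall
    have h3 : lam^2*s ≤ (32/3)*(lam^(2+ρ)*t) := by linarith
    have hb1 : NN/DD ≤ 1/2 := by rw [div_le_iff₀ hDpos]; linarith
    have hb2 : -(lam^2/2)*s ≤ NN/DD := by rw [le_div_iff₀ hDpos]; linarith
    have habs : |NN/DD - lam^2/2*s| ≤ 8*(lam^2*s) := by
      rw [abs_le]
      constructor <;> linarith
    calc |NN/DD - lam^2/2*s| ≤ 8*(lam^2*s) := habs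
    _ ≤ 96*lam^(2+ρ)*t := by linarith


lemma key_bound (hm : m ≤ mΩt) {ρ : ℝ} (hρ : 0 < ρ) (hρ' : ρ ≤ 1)
    {ξ : Ωt → ℝ} (hξm : StronglyMeasurable ξ)
    (hξ2 : Integrable (fun ω => ξ ω ^ 2) P)
    (hξρ : Integrable (fun ω => |ξ ω| ^ (2+ρ)) P)
    (hmean : P[ξ|m] =ᵐ[P] 0)
    (hvar1 : ∀ᵐ ω ∂P, (P[fun ω' => ξ ω' ^ 2|m]) ω ≤ 1)
    {lam : ℝ} (hlam : 0 ≤ lam) :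
    ∀ᵐ ω ∂P,
      |(P[fun ω' => (lam * ξ ω' - lam ^ 2 * ξ ω' ^ 2 / 2) *
            Real.exp (lam * ξ ω' - lam ^ 2 * ξ ω' ^ 2 / 2)|m]) ω /
          (P[fun ω' => Real.exp (lam * ξ ω' - lam ^ 2 * ξ ω' ^ 2 / 2)|m]) ω
        - lam ^ 2 / 2 * (P[fun ω' => ξ ω' ^ 2|m]) ω|
      ≤ 96 * lam ^ (2+ρ) * (P[fun ω' => |ξ ω'| ^ (2+ρ)|m]) ω := by
  -- basic integrability
  have hξ1 : Integrable ξ P := by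
    refine Integrable.mono' ((integrable_const (1:ℝ)).add hξ2) hξm.aestronglyMeasurable ?_
    filter_upwards with ω
    simp only [Real.norm_eq_abs, Pi.add_apply]
    nlinarith [sq_nonneg (|ξ ω| - 1), abs_nonneg (ξ ω), sq_abs (ξ ω)]
  set ζ : Ωt → ℝ := fun ω => lam * ξ ω - lam ^ 2 * ξ ω ^ 2 / 2 with hζdef
  have hζu : ∀ ω, ζ ω = lam * ξ ω - (lam * ξ ω)^2/2 := by
    intro ω; simp only [hζdef]; ring
  have hζhalf : ∀ ω, ζ ω ≤ 1/2 := fun ω => by rw [hζu]; exact z_le_half _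
  have hξmeas : Measurable ξ := hξm.measurable
  have hζmeas : Measurable ζ :=
    (hξmeas.const_mul lam).sub (((hξmeas.pow_const 2).const_mul (lam^2)).div_const 2)
  have hζm : StronglyMeasurable ζ := hζmeas.stronglyMeasurable
  have hEm : StronglyMeasurable (fun ω => Real.exp (ζ ω)) :=
    Real.continuous_exp.comp_stronglyMeasurable hζm
  have hEζ : Integrable (fun ω => Real.exp (ζ ω)) P := by
    refine Integrable.mono' (integrable_const (Real.exp (1/2)))
      hEm.aestronglyMeasurable ?_
    filter_upwards with ω
    rw [Real.norm_eq_abs, abs_of_pos (Real.exp_pos _)]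
    exact Real.exp_le_exp.2 (hζhalf ω)
  have hζEζ : Integrable (fun ω => ζ ω * Real.exp (ζ ω)) P := by
    refine Integrable.mono' (integrable_const (1:ℝ))
      (hζm.mul hEm).aestronglyMeasurable ?_
    filter_upwards with ω
    rw [Real.norm_eq_abs]
    exact abs_mul_exp_le_one (hζhalf ω)
  have hζint : Integrable ζ P := by
    have h1 : Integrable (fun ω => lam * ξ ω) P := hξ1.const_mul lam
    have h2 : Integrable (fun ω => lam^2 * ξ ω^2/2) P := (hξ2.const_mul (lam^2)).div_const 2
    exact h1.sub h2
  -- abbreviations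
  set σ2 := P[fun ω' => ξ ω' ^ 2|m] with hσ2def
  set τ := P[fun ω' => |ξ ω'| ^ (2+ρ)|m] with hτdef
  set D := P[fun ω' => Real.exp (ζ ω')|m] with hDdef
  set N := P[fun ω' => ζ ω' * Real.exp (ζ ω')|m] with hNdef
  have hσ2nn : ∀ᵐ ω ∂P, 0 ≤ σ2 ω := by
    have := condExp_nonneg (m := m) (μ := P)
      (f := fun ω' => ξ ω' ^ 2) (Eventually.of_forall fun ω => sq_nonneg _)
    filter_upwards [this] with ω h; exact h
  have hτnn : ∀ᵐ ω ∂P, 0 ≤ τ ω := by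
    have := condExp_nonneg (m := m) (μ := P)
      (f := fun ω' => |ξ ω'| ^ (2+ρ))
      (Eventually.of_forall fun ω => Real.rpow_nonneg (abs_nonneg _) _)
    filter_upwards [this] with ω h; exact h
  -- f5 : E[ζ|m] = -(lam²/2) σ2
  have f5 : ∀ᵐ ω ∂P, (P[ζ|m]) ω = -(lam^2/2) * σ2 ω := by
    have hsplit : ζ = (fun ω => lam * ξ ω) - (fun ω => lam^2/2 * ξ ω^2) := by
      funext ω; simp only [hζdef, Pi.sub_apply]; ring
    have h1 : P[ζ|m] =ᵐ[P] P[fun ω => lam * ξ ω|m] - P[fun ω => lam^2/2 * ξ ω^2|m] := by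
      rw [hsplit]
      exact condExp_sub (hξ1.const_mul lam) (hξ2.const_mul _) m
    have h2 := condexp_const_mul (m := m) (P := P) lam ξ
    have h3 := condexp_const_mul (m := m) (P := P) (lam^2/2) (fun ω => ξ ω^2)
    filter_upwards [h1, h2, h3, hmean] with ω e1 e2 e3 e4
    simp only [Pi.sub_apply] at e1
    rw [e1, e2, e3, e4]
    simp only [hσ2def, Pi.zero_apply]
    ring
  -- f6 : numerator expansion
  have f6 : ∀ᵐ ω ∂P, |N ω - lam^2/2 * σ2 ω| ≤ 9 * lam^(2+ρ) * τ ω := by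
    have hbound : ∀ᵐ ω ∂P,
        |(fun ω' => ζ ω' * Real.exp (ζ ω')) ω - 0 - lam * ξ ω - lam^2/2 * ξ ω^2| ≤
          9 * lam^(2+ρ) * |ξ ω| ^ (2+ρ) := by
      filter_upwards with ω
      have h1 := hfun_bound hρ hρ' (lam * ξ ω)
      have h2 : ζ ω * Real.exp (ζ ω) - 0 - lam * ξ ω - lam^2/2 * ξ ω^2 =
          (lam * ξ ω - (lam * ξ ω)^2/2) * Real.exp (lam * ξ ω - (lam * ξ ω)^2/2)
            - lam * ξ ω - (lam * ξ ω)^2/2 := by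
        rw [hζu ω]; ring
      have h3 : |lam * ξ ω| ^ (2+ρ) = lam^(2+ρ) * |ξ ω|^(2+ρ) := by
        rw [abs_mul, abs_of_nonneg hlam, Real.mul_rpow hlam (abs_nonneg _)]
      rw [h2]
      calc |(lam * ξ ω - (lam * ξ ω)^2/2) * Real.exp (lam * ξ ω - (lam * ξ ω)^2/2)
            - lam * ξ ω - (lam * ξ ω)^2/2| ≤ 9 * |lam * ξ ω| ^ (2+ρ) := h1
      _ = 9 * lam^(2+ρ) * |ξ ω|^(2+ρ) := by rw [h3]; ring
    have h := condexp_quad_approx hm hξ1 hξ2 hmean (k := 0) (a := lam) (b := lam^2/2)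
      (c := 9 * lam^(2+ρ)) hζEζ hξρ hbound
    filter_upwards [h] with ω e
    simp only [sub_zero] at e
    exact e
  -- f7 : denominator expansion
  have f7 : ∀ᵐ ω ∂P, |D ω - 1| ≤ 5 * lam^2 * σ2 ω := by
    have hbound : ∀ᵐ ω ∂P,
        |(fun ω' => Real.exp (ζ ω')) ω - 1 - lam * ξ ω - 0 * ξ ω^2| ≤
          5 * lam^2 * ξ ω^2 := by
      filter_upwards with ω
      have h1 := gfun_bound (lam * ξ ω)
      have h2 : Real.exp (ζ ω) - 1 - lam * ξ ω - 0 * ξ ω^2 =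
          Real.exp (lam * ξ ω - (lam * ξ ω)^2/2) - 1 - lam * ξ ω := by
        rw [hζu ω]; ring
      rw [h2]
      calc |Real.exp (lam * ξ ω - (lam * ξ ω)^2/2) - 1 - lam * ξ ω| ≤
          5 * (lam * ξ ω)^2 := h1
      _ = 5 * lam^2 * ξ ω^2 := by ring
    have h := condexp_quad_approx hm hξ1 hξ2 hmean (k := 1) (a := lam) (b := 0)
      (c := 5 * lam^2) hEζ hξ2 hbound
    filter_upwards [h] with ω e
    simpa using e
  -- f8 : positivity of D
  have f8 : ∀ᵐ ω ∂P, 0 < D ω :=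
    condexp_pos_of_pos hm hEζ (Eventually.of_forall fun ω => Real.exp_pos _)
  -- f10 : N ≤ D/2
  have f10 : ∀ᵐ ω ∂P, N ω ≤ 1/2 * D ω := by
    have h1 : (fun ω => ζ ω * Real.exp (ζ ω)) ≤ᵐ[P] fun ω => 1/2 * Real.exp (ζ ω) :=
      Eventually.of_forall fun ω => by
        have := mul_exp_le_half_exp (hζhalf ω); linarith
    have h2 := condExp_mono (m := m) hζEζ (hEζ.const_mul (1/2)) h1
    have h3 := condexp_const_mul (m := m) (P := P) (1/2) (fun ω => Real.exp (ζ ω))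
    filter_upwards [h2, h3] with ω e2 e3
    calc N ω ≤ (P[fun ω => 1/2 * Real.exp (ζ ω)|m]) ω := e2
    _ = 1/2 * D ω := e3
  -- f9 : N ≥ -(lam²/2) σ2 · D  (conditional FKG/covariance trick)
  have hσSM : StronglyMeasurable[m] σ2 := stronglyMeasurable_condExp
  set mfun := fun ω => -(lam^2/2) * σ2 ω with hmfundef
  have hmSM : StronglyMeasurable[m] mfun := stronglyMeasurable_const.mul hσSM
  have hm_bound : ∀ᵐ ω ∂P, ‖mfun ω‖ ≤ lam^2/2 := by
    filter_upwards [hσ2nn, hvar1] with ω h1 h2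
    simp only [hmfundef, Real.norm_eq_abs, abs_mul, abs_neg]
    rw [abs_of_nonneg h1, abs_of_nonneg (by positivity : (0:ℝ) ≤ lam^2/2)]
    nlinarith [sq_nonneg lam]
  set expm := fun ω => Real.exp (mfun ω) with hexpmdef
  have hexpmSM : StronglyMeasurable[m] expm :=
    Real.continuous_exp.comp_stronglyMeasurable hmSM
  have hexpm_bound : ∀ᵐ ω ∂P, ‖expm ω‖ ≤ Real.exp (lam^2/2) := by
    filter_upwards [hm_bound] with ω h1
    rw [Real.norm_eq_abs] at h1 ⊢
    rw [abs_of_pos (Real.exp_pos _)]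
    exact Real.exp_le_exp.2 ((le_abs_self _).trans h1)
  have t1 : Integrable (fun ω => mfun ω * Real.exp (ζ ω)) P :=
    hEζ.bdd_mul ((hmSM.mono hm).aestronglyMeasurable) hm_bound
  have t2 : Integrable (fun ω => expm ω * ζ ω) P :=
    hζint.bdd_mul ((hexpmSM.mono hm).aestronglyMeasurable) hexpm_bound
  have t3 : Integrable (fun ω => mfun ω * expm ω) P := by
    refine Integrable.mono' (integrable_const (lam^2/2 * Real.exp (lam^2/2)))
      ((hmSM.mul hexpmSM).mono hm).aestronglyMeasurable ?_
    filter_upwards [hm_bound, hexpm_bound] with ω h1 h2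
    rw [Real.norm_eq_abs, abs_mul]
    rw [Real.norm_eq_abs] at h1 h2
    have := abs_nonneg (mfun ω)
    have := abs_nonneg (expm ω)
    nlinarith [Real.exp_pos (lam^2/2)]
  have f9 : ∀ᵐ ω ∂P, mfun ω * D ω ≤ N ω := by
    have hpt : (fun ω => mfun ω * Real.exp (ζ ω) + expm ω * ζ ω - mfun ω * expm ω)
        ≤ᵐ[P] fun ω => ζ ω * Real.exp (ζ ω) :=
      Eventually.of_forall fun ω => by
        simpa only [hexpmdef] using cov_ineq (ζ ω) (mfun ω)
    have hmono := condExp_mono (m := m) ((t1.add t2).sub t3) hζEζ hpt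
    have hc0 : P[fun ω => mfun ω * Real.exp (ζ ω) + expm ω * ζ ω - mfun ω * expm ω|m]
        =ᵐ[P] P[fun ω => mfun ω * Real.exp (ζ ω) + expm ω * ζ ω|m]
          - P[fun ω => mfun ω * expm ω|m] := condExp_sub (t1.add t2) t3 m
    have hc0' : P[fun ω => mfun ω * Real.exp (ζ ω) + expm ω * ζ ω|m]
        =ᵐ[P] P[fun ω => mfun ω * Real.exp (ζ ω)|m] + P[fun ω => expm ω * ζ ω|m] :=
      condExp_add t1 t2 m
    have hc1 : P[fun ω => mfun ω * Real.exp (ζ ω)|m] =ᵐ[P] fun ω => mfun ω * D ω := by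
      have h := condExp_stronglyMeasurable_mul_of_bound hm hmSM hEζ (lam^2/2) hm_bound
      filter_upwards [h] with ω e
      exact e
    have hc2 : P[fun ω => expm ω * ζ ω|m] =ᵐ[P] fun ω => expm ω * mfun ω := by
      have h := condExp_stronglyMeasurable_mul_of_bound hm hexpmSM hζint
        (Real.exp (lam^2/2)) hexpm_bound
      filter_upwards [h, f5] with ω e1 e2
      have e1' : (P[fun ω => expm ω * ζ ω|m]) ω = expm ω * (P[ζ|m]) ω := e1
      rw [e1', e2]
    have hc3 : P[fun ω => mfun ω * expm ω|m] = fun ω => mfun ω * expm ω :=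
      condExp_of_stronglyMeasurable hm (hmSM.mul hexpmSM) t3
    filter_upwards [hmono, hc0, hc0', hc1, hc2] with ω e0 e1 e2 e3 e4
    have e0' : (P[fun ω => mfun ω * Real.exp (ζ ω) + expm ω * ζ ω - mfun ω * expm ω|m]) ω
        ≤ N ω := e0
    rw [hc3] at e1
    simp only [Pi.sub_apply, Pi.add_apply] at e1 e2
    rw [e1, e2, e3, e4] at e0'
    linarith [e0']
  -- f4 : conditional Lyapunov  σ2^((2+ρ)/2) ≤ τ
  have f4 : ∀ᵐ ω ∂P, σ2 ω ^ ((2+ρ)/2) ≤ τ ω := by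
    set p : ℝ := (2+ρ)/2 with hpdef
    have hp1 : 1 ≤ p := by rw [hpdef]; linarith
    have hp0 : (0:ℝ) ≤ p := by linarith
    have hp10 : (0:ℝ) ≤ p - 1 := by linarith
    have hrpowC : Continuous (fun x : ℝ => x ^ p) :=
      continuous_id.rpow_const (fun x => Or.inr hp0)
    have hrpowC' : Continuous (fun x : ℝ => x ^ (p-1)) :=
      continuous_id.rpow_const (fun x => Or.inr hp10)
    have hσp : StronglyMeasurable[m] (fun ω => σ2 ω ^ p) :=
      hrpowC.comp_stronglyMeasurable hσSM
    have hσp1 : StronglyMeasurable[m] (fun ω => p * σ2 ω ^ (p-1)) :=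
      stronglyMeasurable_const.mul (hrpowC'.comp_stronglyMeasurable hσSM)
    have hσp1_bound : ∀ᵐ ω ∂P, ‖p * σ2 ω ^ (p-1)‖ ≤ p := by
      filter_upwards [hσ2nn, hvar1] with ω h1 h2
      rw [Real.norm_eq_abs, abs_mul, abs_of_nonneg hp0,
        abs_of_nonneg (Real.rpow_nonneg h1 _)]
      have h3 : σ2 ω ^ (p-1) ≤ 1 := Real.rpow_le_one h1 h2 hp10
      nlinarith
    have hσp_bound : ∀ᵐ ω ∂P, ‖σ2 ω ^ p‖ ≤ 1 := by
      filter_upwards [hσ2nn, hvar1] with ω h1 h2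
      rw [Real.norm_eq_abs, abs_of_nonneg (Real.rpow_nonneg h1 _)]
      exact Real.rpow_le_one h1 h2 hp0
    have qa : Integrable (fun ω => σ2 ω ^ p) P :=
      Integrable.mono' (integrable_const 1) ((hσp.mono hm).aestronglyMeasurable) hσp_bound
    have qb : Integrable (fun ω => (p * σ2 ω ^ (p-1)) * σ2 ω) P :=
      integrable_condExp.bdd_mul ((hσp1.mono hm).aestronglyMeasurable) hσp1_bound
    have qc : Integrable (fun ω => (p * σ2 ω ^ (p-1)) * ξ ω ^ 2) P :=
      hξ2.bdd_mul ((hσp1.mono hm).aestronglyMeasurable) hσp1_bound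
    have hpt : (fun ω => (σ2 ω ^ p - (p * σ2 ω ^ (p-1)) * σ2 ω) + (p * σ2 ω ^ (p-1)) * ξ ω ^ 2)
        ≤ᵐ[P] fun ω => |ξ ω| ^ (2+ρ) := by
      filter_upwards [hσ2nn] with ω h1
      have ht := tangent (sq_nonneg (ξ ω)) h1 hp1
      have heq : ((ξ ω)^2) ^ p = |ξ ω| ^ (2+ρ) := by
        rw [← sq_abs, ← Real.rpow_natCast |ξ ω| 2, ← Real.rpow_mul (abs_nonneg _),
          show ((2:ℕ):ℝ) * p = 2+ρ by rw [hpdef]; push_cast; ring]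
      rw [← heq]
      calc (σ2 ω ^ p - (p * σ2 ω ^ (p-1)) * σ2 ω) + (p * σ2 ω ^ (p-1)) * ξ ω ^ 2
          = σ2 ω ^ p + p * σ2 ω ^ (p-1) * (ξ ω ^ 2 - σ2 ω) := by ring
      _ ≤ (ξ ω ^ 2) ^ p := ht
    have hmono := condExp_mono (m := m) ((qa.sub qb).add qc) hξρ hpt
    have hc0 : P[fun ω => (σ2 ω ^ p - (p * σ2 ω ^ (p-1)) * σ2 ω) + (p * σ2 ω ^ (p-1)) * ξ ω ^ 2|m]
        =ᵐ[P] P[fun ω => σ2 ω ^ p - (p * σ2 ω ^ (p-1)) * σ2 ω|m]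
          + P[fun ω => (p * σ2 ω ^ (p-1)) * ξ ω ^ 2|m] := condExp_add (qa.sub qb) qc m
    have hc1 : P[fun ω => σ2 ω ^ p - (p * σ2 ω ^ (p-1)) * σ2 ω|m]
        = fun ω => σ2 ω ^ p - (p * σ2 ω ^ (p-1)) * σ2 ω :=
      condExp_of_stronglyMeasurable hm (hσp.sub (hσp1.mul hσSM)) (qa.sub qb)
    have hc2 : P[fun ω => (p * σ2 ω ^ (p-1)) * ξ ω ^ 2|m]
        =ᵐ[P] fun ω => (p * σ2 ω ^ (p-1)) * σ2 ω := by
      have h := condExp_stronglyMeasurable_mul_of_bound hm hσp1 hξ2 p hσp1_bound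
      filter_upwards [h] with ω e
      exact e
    filter_upwards [hmono, hc0, hc2] with ω e0 e1 e2
    have e0' : (P[fun ω => (σ2 ω ^ p - (p * σ2 ω ^ (p-1)) * σ2 ω)
        + (p * σ2 ω ^ (p-1)) * ξ ω ^ 2|m]) ω ≤ τ ω := e0
    simp only [Pi.add_apply] at e1
    rw [e1, hc1, e2] at e0'
    simp only at e0'
    linarith [e0']
  -- f11 : threshold consequence
  have f11 : ∀ᵐ ω ∂P, (1/16 < lam^2 * σ2 ω → lam^2 * σ2 ω ≤ 1/64 + 8 * lam^(2+ρ) * τ ω) := by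
    rcases eq_or_lt_of_le hlam with hl0 | hl0
    · filter_upwards [hσ2nn] with ω h1 h2
      exfalso
      rw [← hl0] at h2
      nlinarith
    · have hpt : (fun ω => ξ ω^2) ≤ᵐ[P]
          fun ω => (1/8:ℝ)^2/lam^2 + (lam/(1/8))^ρ * |ξ ω|^(2+ρ) :=
        Eventually.of_forall fun ω => threshold hρ hl0 (by norm_num)
      have hint2 : Integrable (fun ω => (1/8:ℝ)^2/lam^2 + (lam/(1/8))^ρ * |ξ ω|^(2+ρ)) P :=
        (integrable_const _).add (hξρ.const_mul _)
      have hmono := condExp_mono (m := m) hξ2 hint2 hpt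
      have hc : P[fun ω => (1/8:ℝ)^2/lam^2 + (lam/(1/8))^ρ * |ξ ω|^(2+ρ)|m]
          =ᵐ[P] fun ω => (1/8:ℝ)^2/lam^2 + (lam/(1/8))^ρ * τ ω := by
        have h1 : P[fun ω => (1/8:ℝ)^2/lam^2 + (lam/(1/8))^ρ * |ξ ω|^(2+ρ)|m] =ᵐ[P]
            P[fun _ => (1/8:ℝ)^2/lam^2|m] + P[fun ω => (lam/(1/8))^ρ * |ξ ω|^(2+ρ)|m] :=
          condExp_add (integrable_const _) (hξρ.const_mul _) m
        have h2 := condexp_const_mul (m := m) (P := P) ((lam/(1/8))^ρ) (fun ω => |ξ ω|^(2+ρ))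
        have h3 : P[fun _ : Ωt => (1/8:ℝ)^2/lam^2|m] = fun _ => (1/8:ℝ)^2/lam^2 :=
          condExp_const hm _
        filter_upwards [h1, h2] with ω e1 e2
        simp only [Pi.add_apply] at e1
        rw [e1, e2, h3]
      filter_upwards [hmono, hc, hτnn] with ω e0 e1 hτω
      intro _
      have e0' : σ2 ω ≤ (1/8:ℝ)^2/lam^2 + (lam/(1/8))^ρ * τ ω := by
        rw [e1] at e0
        exact e0
      have hyρ : (lam/(1/8))^ρ ≤ 8 * lam^ρ := by
        rw [show lam/(1/8) = 8*lam by ring, Real.mul_rpow (by norm_num) hlam]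
        have h8 : (8:ℝ)^ρ ≤ 8 := by
          calc (8:ℝ)^ρ ≤ (8:ℝ)^(1:ℝ) :=
            Real.rpow_le_rpow_of_exponent_le (by norm_num) hρ'
          _ = 8 := Real.rpow_one 8
        nlinarith [Real.rpow_nonneg hlam ρ]
      have hlρ : lam^2 * lam^ρ = lam^(2+ρ) := by
        rw [Real.rpow_add hl0]
        congr 1
        rw [← Real.rpow_natCast lam 2]
        norm_num
      have hconst : lam^2 * ((1/8:ℝ)^2/lam^2) = 1/64 := by
        field_simp
        ring
      have hcross : lam^2 * ((lam/(1/8))^ρ * τ ω) ≤ 8 * lam^(2+ρ) * τ ω := by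
        calc lam^2 * ((lam/(1/8))^ρ * τ ω) ≤ lam^2 * ((8*lam^ρ) * τ ω) := by
              apply mul_le_mul_of_nonneg_left _ (sq_nonneg lam)
              exact mul_le_mul_of_nonneg_right hyρ hτω
        _ = 8 * (lam^2*lam^ρ) * τ ω := by ring
        _ = 8 * lam^(2+ρ) * τ ω := by rw [hlρ]
      have hmul := mul_le_mul_of_nonneg_left e0' (sq_nonneg lam)
      rw [mul_add] at hmul
      linarith [hmul, hcross, hconst.le, hconst.ge]
  -- final assembly
  filter_upwards [hσ2nn, hvar1, hτnn, f4, f6, f7, f8, f9, f10, f11] with ω h1 h2 h3 h4 h5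
    h6 h7 h8 h9 h10
  have hNge : -(lam^2/2) * σ2 ω * D ω ≤ N ω := h8
  have hfinal : |N ω / D ω - lam^2/2 * σ2 ω| ≤ 96 * lam^(2+ρ) * τ ω :=
    final_arith hρ hρ' hlam h1 h2 h3 h4 h5 h6 h7 h9 hNge h10
  exact hfinal

end DriftAux


/-- Lemma 3.4: under (A2) and (A3) with `ρ ∈ (0,1]`, for
`λ_n = o(max{ε_n^{-1}, κ_n^{-1}})`,
`B_n(λ_n) = (λ_n²/2) ⟨M⟩_n + O(1) λ_n^{2+ρ} ε_n^ρ` a.s. -/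
theorem drift_expansion (ρ : ℝ) (hρ : 0 < ρ) (hρ' : ρ ≤ 1) :
    ∃ C : ℝ, 0 < C ∧
      ∀ (Ω : Type) [MeasurableSpace Ω] (P : Measure Ω), IsProbabilityMeasure P →
        ∀ (A : ℕ → MDS Ω P) (ε κ lam : ℕ → ℝ),
          (∀ n, (A n).CondA2 ρ (ε n)) →
          (∀ n, (A n).CondA3 (κ n)) →
          (∀ n, 0 ≤ lam n) →
          Tendsto (fun n => lam n * min (ε n) (κ n)) atTop (nhds 0) →
          ∀ᶠ n in atTop, ∀ᵐ ω ∂P,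
            |(A n).drift (lam n) ω - lam n ^ 2 / 2 * (A n).McondVar ω| ≤
              C * lam n ^ (2 + ρ) * ε n ^ ρ := by
  refine ⟨96, by norm_num, ?_⟩
  intro Ω mΩ P hP A ε κ lam hA2 hA3 hlam _hto
  haveI := hP
  refine Filter.Eventually.of_forall fun n => ?_
  obtain ⟨hε0, hε4, hXρint, hA2sum⟩ := hA2 n
  obtain ⟨hκ0, hκ4, hA3i⟩ := hA3 n
  set An := A n with hAndef
  -- positivity of B_n²
  have hIccne : (Finset.Icc 1 An.n).Nonempty := by
    rw [Finset.nonempty_Icc]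
    exact An.npos
  have hB : 0 < An.Bsq := by
    rw [MDS.Bsq]
    exact Finset.sum_pos
      (fun i hi => An.var_pos i (Finset.mem_Icc.1 hi).1 (Finset.mem_Icc.1 hi).2) hIccne
  have hsqB : 0 < Real.sqrt An.Bsq := Real.sqrt_pos.2 hB
  set Bp : ℝ := An.Bsq ^ ((2+ρ)/2) with hBpdef
  have hBp : 0 < Bp := Real.rpow_pos_of_pos hB _
  have hsqBpow : Real.sqrt An.Bsq ^ (2+ρ) = Bp := by
    rw [hBpdef, Real.sqrt_eq_rpow, ← Real.rpow_mul hB.le]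
    congr 1
    ring
  -- rewriting xi-based functions in terms of X
  have hxi2eq : ∀ i, (fun ω => (An.xi i ω)^2) = fun ω => An.Bsq⁻¹ * (An.X i ω)^2 := by
    intro i
    funext ω
    simp only [MDS.xi]
    rw [div_pow, Real.sq_sqrt hB.le]
    ring
  have hxiρeq : ∀ i, (fun ω => |An.xi i ω|^(2+ρ)) = fun ω => Bp⁻¹ * |An.X i ω|^(2+ρ) := by
    intro i
    funext ω
    simp only [MDS.xi]
    rw [abs_div, abs_of_nonneg (Real.sqrt_nonneg _),
      Real.div_rpow (abs_nonneg _) (Real.sqrt_nonneg _), hsqBpow]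
    ring
  -- the per-term estimate
  have keyi : ∀ i ∈ Finset.Icc 1 An.n, ∀ᵐ ω ∂P,
      |An.bCoef (lam n) i ω
          - lam n ^2/2 * (P[fun ω' => (An.xi i ω')^2|An.F (i-1)]) ω|
        ≤ 96 * lam n ^(2+ρ) * (P[fun ω' => |An.xi i ω'|^(2+ρ)|An.F (i-1)]) ω := by
    intro i hi
    obtain ⟨hi1, hi2⟩ := Finset.mem_Icc.1 hi
    have hmle : An.F (i-1) ≤ mΩ := An.F_le (i-1)
    have hXm : StronglyMeasurable (An.X i) := (An.meas i hi1 hi2).mono (An.F_le i)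
    have hξm : StronglyMeasurable (An.xi i) := by
      have : An.xi i = fun ω => An.X i ω / Real.sqrt An.Bsq := rfl
      rw [this]
      exact (hXm.measurable.div_const _).stronglyMeasurable
    have hξ2 : Integrable (fun ω => (An.xi i ω)^2) P := by
      rw [hxi2eq i]
      exact (An.sq_int i hi1 hi2).const_mul _
    have hξρ : Integrable (fun ω => |An.xi i ω|^(2+ρ)) P := by
      rw [hxiρeq i]
      exact (hXρint i hi1 hi2).const_mul _
    have hmean : P[An.xi i|An.F (i-1)] =ᵐ[P] 0 := by
      have h0 : An.xi i = fun ω => (Real.sqrt An.Bsq)⁻¹ * An.X i ω := by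
        funext ω; simp only [MDS.xi]; ring
      rw [h0]
      have h1 := DriftAux.condexp_const_mul (m := An.F (i-1)) (P := P)
        (Real.sqrt An.Bsq)⁻¹ (An.X i)
      have h2 := An.mean_zero i hi1 hi2
      filter_upwards [h1, h2] with ω e1 e2
      rw [e1, e2]
      simp
    have hvar1 : ∀ᵐ ω ∂P, (P[fun ω' => (An.xi i ω')^2|An.F (i-1)]) ω ≤ 1 := by
      have h1 : P[fun ω' => (An.xi i ω')^2|An.F (i-1)] =ᵐ[P]
          fun ω => An.Bsq⁻¹ * (P[fun ω' => (An.X i ω')^2|An.F (i-1)]) ω := by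
        rw [hxi2eq i]
        exact DriftAux.condexp_const_mul _ _
      filter_upwards [h1, hA3i i hi1 hi2] with ω e1 e2
      rw [e1]
      have h3 : An.Bsq⁻¹ * (P[fun ω' => (An.X i ω')^2|An.F (i-1)]) ω
          ≤ An.Bsq⁻¹ * ((κ n)^2 * An.Bsq) :=
        mul_le_mul_of_nonneg_left e2 (by positivity)
      have h4 : An.Bsq⁻¹ * ((κ n)^2 * An.Bsq) = (κ n)^2 := by
        field_simp
      rw [h4] at h3
      nlinarith [hκ0, hκ4]
    have hkb := DriftAux.key_bound hmle hρ hρ' hξm hξ2 hξρ hmean hvar1 (hlam n)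
    filter_upwards [hkb] with ω e
    simp only [MDS.bCoef, MDS.zetaFn]
    exact e
  -- sum of conditional (2+ρ)-moments of xi is at most ε^ρ
  have htausum : ∀ᵐ ω ∂P,
      ∑ i ∈ Finset.Icc 1 An.n,
          (P[fun ω' => |An.xi i ω'|^(2+ρ)|An.F (i-1)]) ω ≤ ε n ^ ρ := by
    have hper : ∀ i ∈ Finset.Icc 1 An.n, ∀ᵐ ω ∂P,
        (P[fun ω' => |An.xi i ω'|^(2+ρ)|An.F (i-1)]) ω
          = Bp⁻¹ * (P[fun ω' => |An.X i ω'|^(2+ρ)|An.F (i-1)]) ω := by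
      intro i hi
      have h1 : P[fun ω' => |An.xi i ω'|^(2+ρ)|An.F (i-1)] =ᵐ[P]
          fun ω => Bp⁻¹ * (P[fun ω' => |An.X i ω'|^(2+ρ)|An.F (i-1)]) ω := by
        rw [hxiρeq i]
        exact DriftAux.condexp_const_mul _ _
      exact h1
    have hall := (Filter.eventually_all_finset (Finset.Icc 1 An.n)).2 hper
    filter_upwards [hall, hA2sum] with ω e1 e2
    have hsum : ∑ i ∈ Finset.Icc 1 An.n,
        (P[fun ω' => |An.xi i ω'|^(2+ρ)|An.F (i-1)]) ω
          = Bp⁻¹ * ∑ i ∈ Finset.Icc 1 An.n,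
              (P[fun ω' => |An.X i ω'|^(2+ρ)|An.F (i-1)]) ω := by
      rw [Finset.mul_sum]
      exact Finset.sum_congr rfl fun i hi => e1 i hi
    rw [hsum]
    calc Bp⁻¹ * ∑ i ∈ Finset.Icc 1 An.n,
          (P[fun ω' => |An.X i ω'|^(2+ρ)|An.F (i-1)]) ω
        ≤ Bp⁻¹ * (ε n ^ ρ * Bp) := mul_le_mul_of_nonneg_left e2 (by positivity)
    _ = ε n ^ ρ := by field_simp
  -- put everything together
  have hallkey := (Filter.eventually_all_finset (Finset.Icc 1 An.n)).2 keyi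
  filter_upwards [hallkey, htausum] with ω e1 e2
  have hdecomp : An.drift (lam n) ω - lam n^2/2 * An.McondVar ω
      = ∑ i ∈ Finset.Icc 1 An.n,
          (An.bCoef (lam n) i ω
            - lam n^2/2 * (P[fun ω' => (An.xi i ω')^2|An.F (i-1)]) ω) := by
    simp only [MDS.drift, MDS.McondVar]
    rw [Finset.mul_sum, ← Finset.sum_sub_distrib]
  rw [hdecomp]
  have hl0 : (0:ℝ) ≤ 96 * lam n ^(2+ρ) :=
    mul_nonneg (by norm_num) (Real.rpow_nonneg (hlam n) _)
  calc |∑ i ∈ Finset.Icc 1 An.n,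
        (An.bCoef (lam n) i ω
          - lam n^2/2 * (P[fun ω' => (An.xi i ω')^2|An.F (i-1)]) ω)|
      ≤ ∑ i ∈ Finset.Icc 1 An.n,
        |An.bCoef (lam n) i ω
          - lam n^2/2 * (P[fun ω' => (An.xi i ω')^2|An.F (i-1)]) ω| :=
        Finset.abs_sum_le_sum_abs _ _
  _ ≤ ∑ i ∈ Finset.Icc 1 An.n,
        96 * lam n ^(2+ρ) * (P[fun ω' => |An.xi i ω'|^(2+ρ)|An.F (i-1)]) ω :=
        Finset.sum_le_sum fun i hi => e1 i hi
  _ = 96 * lam n ^(2+ρ) * ∑ i ∈ Finset.Icc 1 An.n,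
        (P[fun ω' => |An.xi i ω'|^(2+ρ)|An.F (i-1)]) ω := by
        rw [Finset.mul_sum]
  _ ≤ 96 * lam n ^ (2+ρ) * ε n ^ ρ := mul_le_mul_of_nonneg_left e2 hl0
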